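/- For a prime p, let R(x) = Σ_{i≥0} (-1)^i x^{p^i - 1} and W(x) = 1 + x^{p-1}, viewed as formal power series over Z/p. Then x·R(x) is a left inverse of x·W(x) under composition of formal power series, i.e. (x·R(x)) ∘ (x·W(x)) = x in (Z/p)[[x]]. -/

import Mathlib

open PowerSeries

/-- Composition `g ∘ f` of formal power series, meaningful when `f` has zero constant
term: the `k`-th coefficient only depends on `∑_{n ≤ k} g_n f^n` since `f^n` then has
order at least `n`. -/
noncomputable def psComp {R : Type*} [CommRing R] (g f : PowerSeries R) : PowerSeries R :=
  PowerSeries.mk fun k =>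
    PowerSeries.coeff (R := R) k (∑ n ∈ Finset.range (k + 1), PowerSeries.C (R := R) (PowerSeries.coeff (R := R) n g) * f ^ n)

/-- The series `R(x) = ∑_{i ≥ 0} (-1)^i x^{p^i - 1}` over `ℤ/p`: the coefficient of `x^n`
is `(-1)^i` if `n + 1 = p^i`, and `0` otherwise. -/
noncomputable def Rseries (p : ℕ) : PowerSeries (ZMod p) := by
  classical exact
  PowerSeries.mk fun n => if h : ∃ i : ℕ, n + 1 = p ^ i then (-1) ^ h.choose else 0

/-- The series `W(x) = 1 + x^{p-1}` over `ℤ/p`. -/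
noncomputable def Wseries (p : ℕ) : PowerSeries (ZMod p) :=
  1 + (PowerSeries.X : PowerSeries (ZMod p)) ^ (p - 1)

lemma XW_eq (p : ℕ) (hp : p.Prime) :
    (PowerSeries.X : PowerSeries (ZMod p)) * Wseries p =
      PowerSeries.X + PowerSeries.X ^ p := by
  have h2 := hp.two_le
  rw [Wseries, mul_add, mul_one]
  congr 1
  rw [← pow_succ']
  congr 1
  omega

lemma XW_pow (p : ℕ) (hp : p.Prime) (i : ℕ) :
    ((PowerSeries.X + PowerSeries.X ^ p : PowerSeries (ZMod p))) ^ (p ^ i) =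
      PowerSeries.X ^ (p ^ i) + PowerSeries.X ^ (p ^ (i + 1)) := by
  haveI := Fact.mk hp
  haveI : CharP (PowerSeries (ZMod p)) p :=
    charP_of_injective_ringHom PowerSeries.C_injective p
  rw [add_pow_char_pow, ← pow_mul, ← pow_succ']

lemma XR_coeff_pow (p : ℕ) (hp : p.Prime) (i : ℕ) :
    PowerSeries.coeff (R := ZMod p) (p ^ i) (PowerSeries.X * Rseries p) = (-1) ^ i := by
  classical
  have h1 : (1:ℕ) ≤ p ^ i := Nat.one_le_pow _ _ hp.pos
  obtain ⟨m, hm⟩ : ∃ m, p ^ i = m + 1 := ⟨p ^ i - 1, by omega⟩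
  rw [hm, PowerSeries.coeff_succ_X_mul, Rseries, PowerSeries.coeff_mk]
  have hex : ∃ j : ℕ, m + 1 = p ^ j := ⟨i, hm.symm⟩
  rw [dif_pos hex]
  congr 1
  have := hex.choose_spec
  exact (Nat.pow_right_injective hp.two_le (by omega : p ^ hex.choose = p ^ i)).symm ▸ rfl

lemma XR_coeff_zero (p : ℕ) (n : ℕ) (hn : ¬ ∃ i : ℕ, n = p ^ i) :
    PowerSeries.coeff (R := ZMod p) n (PowerSeries.X * Rseries p) = 0 := by
  classical
  cases n with
  | zero => simp
  | succ m =>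
    rw [PowerSeries.coeff_succ_X_mul, Rseries, PowerSeries.coeff_mk, dif_neg]
    exact hn

/-- Over `ℤ/p`, `x·R(x)` is a left inverse of `x·W(x)` for composition of power series:
`(x·R(x)) ∘ (x·W(x)) = x`. -/
theorem stmt_16 (p : ℕ) (hp : p.Prime) :
    psComp (PowerSeries.X * Rseries p) (PowerSeries.X * Wseries p)
      = (PowerSeries.X : PowerSeries (ZMod p)) := by
  classical
  have hinj := Nat.pow_right_injective hp.two_le
  ext k
  rw [psComp, PowerSeries.coeff_mk, map_sum, XW_eq p hp]
  simp only [PowerSeries.coeff_C_mul]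
  -- the k-th coefficient of each summand
  set t : ℕ → ZMod p := fun n =>
    PowerSeries.coeff (R := ZMod p) n (PowerSeries.X * Rseries p) *
      PowerSeries.coeff (R := ZMod p) k ((PowerSeries.X + PowerSeries.X ^ p) ^ n) with ht
  show ∑ n ∈ Finset.range (k + 1), t n = _
  -- value of t at a power of p
  have htpow : ∀ i : ℕ, t (p ^ i) =
      (-1) ^ i * ((if k = p ^ i then 1 else 0) + (if k = p ^ (i+1) then 1 else 0)) := by
    intro i
    rw [ht]
    simp only
    rw [XR_coeff_pow p hp, XW_pow p hp, map_add, PowerSeries.coeff_X_pow,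
      PowerSeries.coeff_X_pow]
  -- t vanishes off powers of p
  have ht0 : ∀ n, (¬ ∃ i : ℕ, n = p ^ i) → t n = 0 := by
    intro n hn
    rw [ht]
    simp only
    rw [XR_coeff_zero p n hn, zero_mul]
  by_cases hk : ∃ j : ℕ, k = p ^ j
  · obtain ⟨j, rfl⟩ := hk
    rcases Nat.eq_zero_or_pos j with hj | hj
    · subst hj
      -- k = 1 : only the n = 1 term contributes
      rw [Finset.sum_eq_single (p ^ 0)]
      · rw [htpow 0]
        have h2 : (1:ℕ) ≠ p := hp.one_lt.ne
        simp [h2, PowerSeries.coeff_X]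
      · intro n hn hne
        by_cases h : ∃ i : ℕ, n = p ^ i
        · obtain ⟨i, rfl⟩ := h
          rw [htpow i]
          have h1 : ¬ ((1:ℕ) = p ^ i) := fun h => hne (by simpa using h.symm)
          have h2 : ¬ ((1:ℕ) = p ^ (i + 1)) := by
            have := Nat.one_lt_pow (by omega : i + 1 ≠ 0) hp.one_lt
            omega
          simp [h1, h2]
        · exact ht0 n h
      · intro h
        exact absurd (Finset.mem_range.2 (by omega)) h
    · -- k = p ^ j with j ≥ 1 : the n = p^(j-1) and n = p^j terms contribute
      have hlt : p ^ (j - 1) < p ^ j := Nat.pow_lt_pow_right hp.one_lt (by omega)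
      have hsub : ({p ^ (j-1), p ^ j} : Finset ℕ) ⊆ Finset.range (p ^ j + 1) := by
        intro x hx
        rcases Finset.mem_insert.1 hx with h | h
        · exact Finset.mem_range.2 (by omega)
        · rw [Finset.mem_singleton.1 h]; exact Finset.mem_range.2 (by omega)
      rw [← Finset.sum_subset hsub]
      · rw [Finset.sum_pair (by omega : p ^ (j-1) ≠ p ^ j), htpow, htpow,
          Nat.sub_add_cancel hj]
        have h1 : p ^ j ≠ p ^ (j - 1) := by omega
        have h2 : p ^ j ≠ p ^ (j + 1) := fun h => by have := hinj h; omega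
        have h3 : ¬ p ^ j = 1 := by
          have := Nat.one_lt_pow (by omega : j ≠ 0) hp.one_lt
          omega
        rw [if_neg h1, if_pos rfl, if_neg h2, PowerSeries.coeff_X,
          if_neg h3]
        obtain ⟨m, rfl⟩ : ∃ m, j = m + 1 := ⟨j - 1, by omega⟩
        simp [pow_succ]
      · intro n hn hne
        by_cases h : ∃ i : ℕ, n = p ^ i
        · obtain ⟨i, rfl⟩ := h
          rw [htpow i]
          have hne1 : p ^ i ≠ p ^ (j - 1) := fun h => hne (by simp [h])
          have hne2 : p ^ i ≠ p ^ j := fun h => hne (by simp [h])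
          have h1 : p ^ j ≠ p ^ i := fun h => hne2 h.symm
          have h2 : p ^ j ≠ p ^ (i + 1) := by
            intro h
            have hij : j = i + 1 := hinj h
            exact hne1 (by rw [hij]; simp)
          simp [h1, h2]
        · exact ht0 n h
  · -- k is not a power of p : every term vanishes, as does the coefficient of X
    rw [Finset.sum_eq_zero, PowerSeries.coeff_X,
      if_neg (fun h => hk ⟨0, by simpa using h⟩)]
    intro n hn
    by_cases h : ∃ i : ℕ, n = p ^ i
    · obtain ⟨i, rfl⟩ := h
      rw [htpow i, if_neg (fun h => hk ⟨i, h⟩), if_neg (fun h => hk ⟨i+1, h⟩)]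
      simp
    · exact ht0 n h
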